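/- arXiv:1510.05412 — 4 statements merged into one kernel-verified Lean document; each statement's English description precedes it below -/
import Mathlib

section
/- Let G be a σ-compact locally compact group and ν, ν' nonnegative bounded Radon measures on G with ν ⊥ ν'. Then for any neighbourhood V of the identity there exist a K_σ set E ⊆ G and a compact normal subgroup N ⊆ V of G with χ(G/N) ≤ ℵ₀ such that ν(E) = ν(G) and ν'(E·N) = 0; in particular ν ∗ λ_N ⊥ ν' ∗ λ_N, where λ_N is the normalized Haar measure of N. -/
open MeasureTheory Topology Pointwise
open scoped ENNReal NNReal

/-- The local weight (character) of a topological space at a point: the least cardinality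
of a neighbourhood base at the point. -/
noncomputable def localWeight (X : Type u) [TopologicalSpace X] (x : X) : Cardinal.{u} :=
  ⨅ B : {S : Set (Set X) // (𝓝 x).HasBasis (· ∈ S) id}, Cardinal.mk B.1

section KKhelpers

variable {G : Type*} [Group G] [TopologicalSpace G] [IsTopologicalGroup G]
  [LocallyCompactSpace G] [T2Space G]

lemma conj_mem_of_nhds {K A : Set G} (hK : IsCompact K) (hA : A ∈ 𝓝 (1 : G)) :
    ∃ D ∈ 𝓝 (1 : G), ∀ g ∈ K, ∀ x ∈ D, g * x * g⁻¹ ∈ A := by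
  have key : ∀ g : G, ∃ P : Set G, P ∈ 𝓝 g ∧ ∃ D ∈ 𝓝 (1 : G),
      ∀ h ∈ P, ∀ x ∈ D, h * x * h⁻¹ ∈ A := by
    intro g
    have hc : ContinuousAt (fun p : G × G => p.1 * p.2 * p.1⁻¹) (g, 1) := by fun_prop
    have h1 : (fun p : G × G => p.1 * p.2 * p.1⁻¹) (g, 1) = 1 := by simp
    have hmem : (fun p : G × G => p.1 * p.2 * p.1⁻¹) ⁻¹' A ∈ 𝓝 ((g, 1) : G × G) := by
      apply hc
      rw [h1]; exact hA
    rw [nhds_prod_eq, Filter.mem_prod_iff] at hmem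
    obtain ⟨P, hP, D, hD, hPD⟩ := hmem
    exact ⟨P, hP, D, hD, fun h hh x hx => hPD (Set.mk_mem_prod hh hx)⟩
  choose P hP D hD hPD using key
  obtain ⟨t, -, hKt⟩ := hK.elim_nhds_subcover P (fun x _ => hP x)
  refine ⟨⋂ g ∈ t, D g, (Filter.biInter_finset_mem t).mpr fun g _ => hD g, ?_⟩
  intro g hg x hx
  obtain ⟨g₀, hg₀t, hgP⟩ := Set.mem_iUnion₂.1 (hKt hg)
  exact hPD g₀ g hgP x (Set.mem_iInter₂.1 hx g₀ hg₀t)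

lemma exists_compact_conj_step {K A : Set G} (hK : IsCompact K) (hA : A ∈ 𝓝 (1 : G)) :
    ∃ U : Set G, IsCompact U ∧ U ∈ 𝓝 (1 : G) ∧ U⁻¹ = U ∧ U * U ⊆ A ∧
      ∀ g ∈ K, ∀ x ∈ U, g * x * g⁻¹ ∈ A := by
  obtain ⟨D, hD, hDconj⟩ := conj_mem_of_nhds hK hA
  obtain ⟨C, hCopen, hC1, hCC⟩ := exists_open_nhds_one_mul_subset hA
  obtain ⟨Q, hQmem, hQsub, hQcomp⟩ :=
    local_compact_nhds (Filter.inter_mem (hCopen.mem_nhds hC1) hD)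
  have hQinv : Q⁻¹ ∈ 𝓝 (1 : G) := by
    have : (·⁻¹ : G → G) ⁻¹' Q ∈ 𝓝 (1 : G) := by
      apply (continuous_inv.continuousAt (x := (1 : G)))
      show Q ∈ 𝓝 ((1:G)⁻¹)
      rwa [inv_one]
    rwa [Set.inv_preimage] at this
  refine ⟨Q ∩ Q⁻¹, hQcomp.inter_right hQcomp.inv.isClosed,
    Filter.inter_mem hQmem hQinv, ?_, ?_, ?_⟩
  · rw [Set.inter_inv, inv_inv, Set.inter_comm]
  · intro z hz
    obtain ⟨a, ha, b, hb, rfl⟩ := hz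
    exact hCC (Set.mul_mem_mul ((hQsub ha.1).1) ((hQsub hb.1).1))
  · intro g hg x hx
    exact hDconj g hg x (hQsub hx.1).2

end KKhelpers

section KK

variable {G : Type*} [Group G] [TopologicalSpace G] [IsTopologicalGroup G]
  [LocallyCompactSpace G] [T2Space G] [SigmaCompactSpace G]

lemma kakutani_kodaira (W : ℕ → Set G) (hW : ∀ n, W n ∈ 𝓝 (1 : G)) :
    ∃ N : Subgroup G, IsCompact (N : Set G) ∧ N.Normal ∧ (∀ n, (N : Set G) ⊆ W n) ∧
      ∃ U : ℕ → Set G, (∀ n, U n ∈ 𝓝 (1 : G)) ∧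
        (∀ O : Set G, IsOpen O → (N : Set G) ⊆ O → ∃ n, U n ⊆ O) := by
  have step : ∀ A : Set G, A ∈ 𝓝 (1 : G) → ∀ m : ℕ, ∃ U : Set G,
      (IsCompact U ∧ U ∈ 𝓝 (1 : G) ∧ U⁻¹ = U) ∧ U * U ⊆ A ∧
      ∀ g ∈ compactCovering G m, ∀ x ∈ U, g * x * g⁻¹ ∈ A := by
    intro A hA m
    obtain ⟨U, h1, h2, h3, h4, h5⟩ :=
      exists_compact_conj_step (isCompact_compactCovering G m) hA
    exact ⟨U, ⟨h1, h2, h3⟩, h4, h5⟩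
  choose F hF hFmul hFconj using step
  let seq : ℕ → {S : Set G // IsCompact S ∧ S ∈ 𝓝 (1 : G) ∧ S⁻¹ = S} := fun n =>
    Nat.rec ⟨F Set.univ Filter.univ_mem 0, hF _ _ _⟩
      (fun n prev => ⟨F (prev.1 ∩ W n) (Filter.inter_mem prev.2.2.1 (hW n)) (n + 1),
        hF _ _ _⟩) n
  set U : ℕ → Set G := fun n => (seq n).1 with hUdef
  have hUc : ∀ n, IsCompact (U n) := fun n => (seq n).2.1
  have hUnhds : ∀ n, U n ∈ 𝓝 (1 : G) := fun n => (seq n).2.2.1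
  have hUsymm : ∀ n, (U n)⁻¹ = U n := fun n => (seq n).2.2.2
  have hmul : ∀ n, U (n + 1) * U (n + 1) ⊆ U n ∩ W n := fun n => hFmul _ _ _
  have hconj : ∀ n, ∀ g ∈ compactCovering G (n + 1), ∀ x ∈ U (n + 1),
      g * x * g⁻¹ ∈ U n ∩ W n := fun n => hFconj _ _ _
  have hone : ∀ n, (1 : G) ∈ U n := fun n => mem_of_mem_nhds (hUnhds n)
  have hsub : ∀ n, U (n + 1) ⊆ U n := by
    intro n x hx
    have h : x * 1 ∈ U (n + 1) * U (n + 1) := Set.mul_mem_mul hx (hone (n + 1))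
    rw [mul_one] at h
    exact (hmul n h).1
  have hanti : Antitone U := antitone_nat_of_succ_le hsub
  have hWsub : ∀ n, U (n + 1) ⊆ W n := by
    intro n x hx
    have h : x * 1 ∈ U (n + 1) * U (n + 1) := Set.mul_mem_mul hx (hone (n + 1))
    rw [mul_one] at h
    exact (hmul n h).2
  let N : Subgroup G :=
    { carrier := ⋂ n, U n
      one_mem' := Set.mem_iInter.2 hone
      mul_mem' := by
        intro a b ha hb
        rw [Set.mem_iInter] at *
        intro n
        exact (hmul n (Set.mul_mem_mul (ha (n + 1)) (hb (n + 1)))).1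
      inv_mem' := by
        intro a ha
        rw [Set.mem_iInter] at *
        intro n
        rw [← hUsymm n]
        exact Set.inv_mem_inv.2 (ha n) }
  have hNcoe : (N : Set G) = ⋂ n, U n := rfl
  have hnormal : N.Normal := by
    constructor
    intro x hx g
    have hxU : ∀ n, x ∈ U n := Set.mem_iInter.1 hx
    obtain ⟨m, hm⟩ := exists_mem_compactCovering g
    show g * x * g⁻¹ ∈ N
    have : ∀ n, g * x * g⁻¹ ∈ U n := by
      intro n
      have hg' : g ∈ compactCovering G (max m n + 1) :=
        compactCovering_subset G (le_trans (le_max_left m n) (Nat.le_succ _)) hm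
      have h := (hconj (max m n) g hg' x (hxU (max m n + 1))).1
      exact hanti (le_max_right m n) h
    exact Set.mem_iInter.2 this
  have hNcomp : IsCompact (N : Set G) := by
    rw [hNcoe]
    exact (hUc 0).of_isClosed_subset (isClosed_iInter fun n => (hUc n).isClosed)
      (Set.iInter_subset _ 0)
  have hNW : ∀ n, (N : Set G) ⊆ W n := by
    intro n x hx
    exact hWsub n (Set.mem_iInter.1 hx (n + 1))
  have hsep : ∀ O : Set G, IsOpen O → (N : Set G) ⊆ O → ∃ n, U n ⊆ O := by
    intro O hO hNO
    by_contra h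
    push_neg at h
    have hne : ∀ n, (U n ∩ Oᶜ).Nonempty := by
      intro n
      obtain ⟨x, hx, hxO⟩ := Set.not_subset.1 (h n)
      exact ⟨x, hx, hxO⟩
    have hcl : ∀ n, IsClosed (U n ∩ Oᶜ) :=
      fun n => (hUc n).isClosed.inter (isClosed_compl_iff.2 hO)
    have hcp : ∀ n, IsCompact (U n ∩ Oᶜ) :=
      fun n => (hUc n).inter_right (isClosed_compl_iff.2 hO)
    have hdir : Directed (· ⊇ ·) (fun n => U n ∩ Oᶜ) := by
      intro a b
      exact ⟨max a b, Set.inter_subset_inter_left _ (hanti (le_max_left a b)),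
        Set.inter_subset_inter_left _ (hanti (le_max_right a b))⟩
    obtain ⟨x, hx⟩ :=
      IsCompact.nonempty_iInter_of_directed_nonempty_isCompact_isClosed _ hdir hne hcp hcl
    have hx' := Set.mem_iInter.1 hx
    have hxN : x ∈ (N : Set G) := Set.mem_iInter.2 fun n => (hx' n).1
    exact (hx' 0).2 (hNO hxN)
  exact ⟨N, hNcomp, hnormal, hNW, U, hUnhds, hsep⟩

end KK

lemma localWeight_quotient_le {G : Type u} [Group G] [TopologicalSpace G] [IsTopologicalGroup G]
    (N : Subgroup G) [hN : N.Normal] (U : ℕ → Set G) (hUnhds : ∀ n, U n ∈ 𝓝 (1 : G))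
    (hsep : ∀ O : Set G, IsOpen O → (N : Set G) ⊆ O → ∃ n, U n ⊆ O) :
    localWeight (G ⧸ N) (QuotientGroup.mk 1) ≤ Cardinal.aleph0 := by
  set π : G → G ⧸ N := QuotientGroup.mk with hπ
  set B : Set (Set (G ⧸ N)) := Set.range (fun n => π '' U n) with hB
  have hπc : Continuous π := QuotientGroup.continuous_mk
  have hπo : IsOpenMap π := QuotientGroup.isOpenMap_coe
  have hmem : ∀ n, π '' U n ∈ 𝓝 (π 1) := by
    intro n
    have h1 : (1 : G) ∈ interior (U n) := mem_interior_iff_mem_nhds.2 (hUnhds n)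
    exact Filter.mem_of_superset ((hπo _ isOpen_interior).mem_nhds ⟨1, h1, rfl⟩)
      (Set.image_mono interior_subset)
  have hbasis : (𝓝 (π 1)).HasBasis (· ∈ B) id := by
    constructor
    intro t
    constructor
    · intro ht
      have hst : π ⁻¹' t ∈ 𝓝 (1 : G) := hπc.continuousAt.preimage_mem_nhds ht
      have hNsub : (N : Set G) ⊆ interior (π ⁻¹' t) := by
        intro g hg
        rw [mem_interior_iff_mem_nhds]
        have hgx : ∀ x : G, π (g * x) = π x := by
          intro x
          show QuotientGroup.mk (g * x) = QuotientGroup.mk x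
          have : (QuotientGroup.mk g : G ⧸ N) = 1 := (QuotientGroup.eq_one_iff g).2 hg
          rw [QuotientGroup.mk_mul, this, one_mul]
        have hpre : (g * ·) ⁻¹' (π ⁻¹' t) = π ⁻¹' t := by
          ext x
          simp only [Set.mem_preimage, hgx]
        have hmap := (Homeomorph.mulLeft g).map_nhds_eq (1 : G)
        simp only [Homeomorph.coe_mulLeft, mul_one] at hmap
        rw [← hmap, Filter.mem_map, hpre]
        exact hst
      obtain ⟨n, hn⟩ := hsep _ isOpen_interior hNsub
      refine ⟨π '' U n, ⟨n, rfl⟩, ?_⟩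
      calc π '' U n ⊆ π '' (π ⁻¹' t) := Set.image_mono (hn.trans interior_subset)
        _ ⊆ t := Set.image_preimage_subset _ _
    · rintro ⟨s, ⟨n, rfl⟩, hst⟩
      exact Filter.mem_of_superset (hmem n) hst
  have hcount : Countable B := (Set.countable_range _).to_subtype
  exact le_trans (ciInf_le' _ ⟨B, hbasis⟩) Cardinal.mk_le_aleph0

lemma mconv_apply_eq_zero {M : Type*} [Monoid M] [MeasurableSpace M]
    {μ l : MeasureTheory.Measure M} [MeasureTheory.SFinite μ] [MeasureTheory.SFinite l]
    {A s t : Set M} (hA : MeasurableSet A)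
    (hμ : μ sᶜ = 0) (hl : l tᶜ = 0) (h : ∀ x ∈ s, ∀ y ∈ t, x * y ∉ A) :
    μ.mconv l A = 0 := by
  rw [Measure.mconv]
  by_cases hm : AEMeasurable (fun p : M × M => p.1 * p.2) (μ.prod l)
  · rw [Measure.map_apply_of_aemeasurable hm hA]
    refine measure_mono_null (t := sᶜ ×ˢ Set.univ ∪ Set.univ ×ˢ tᶜ) (fun p hp => ?_) ?_
    · by_contra hcon
      simp only [Set.mem_union, Set.mem_prod, Set.mem_compl_iff, Set.mem_univ, and_true,
        true_and, not_or, not_not] at hcon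
      exact h p.1 hcon.1 p.2 hcon.2 hp
    · refine measure_union_null ?_ ?_
      · rw [Measure.prod_prod]
        simp [hμ]
      · rw [Measure.prod_prod]
        simp [hl]
  · rw [Measure.map_of_not_aemeasurable hm]
    simp

lemma haar_map_mul_right {H : Type*} [Group H] [TopologicalSpace H] [IsTopologicalGroup H]
    [CompactSpace H] [T2Space H] [Nonempty H] [MeasurableSpace H] [BorelSpace H] (h : H) :
    (Measure.haarMeasure (⊤ : TopologicalSpace.PositiveCompacts H)).map (· * h) =
      Measure.haarMeasure ⊤ := by
  haveI hp : IsProbabilityMeasure (Measure.haarMeasure (⊤ : TopologicalSpace.PositiveCompacts H)) := by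
    constructor
    rw [← TopologicalSpace.PositiveCompacts.coe_top]
    exact Measure.haarMeasure_self
  haveI : IsProbabilityMeasure
      ((Measure.haarMeasure (⊤ : TopologicalSpace.PositiveCompacts H)).map (· * h)) :=
    Measure.isProbabilityMeasure_map (measurable_mul_const h).aemeasurable
  exact Measure.isHaarMeasure_eq_of_isProbabilityMeasure _ _


/-- Let `G` be a σ-compact locally compact group, `ν ⊥ ν'` nonnegative
bounded Radon measures on `G`, and `V` a neighbourhood of the identity. Then there exist a
`K_σ`-set `E ⊆ G` and a compact normal subgroup `N ⊆ V` with metrizable quotient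
(`χ(G/N) ≤ ℵ₀`) such that `ν(E) = ν(G)`, `ν'(E·N) = 0`, and consequently
`ν ∗ λ_N ⊥ ν' ∗ λ_N`, where `λ_N` is the normalized Haar measure of `N` (characterized as
the `N`-bi-invariant probability measure carried by `N`). -/
theorem stmt_12 {G : Type u} [Group G] [TopologicalSpace G] [IsTopologicalGroup G]
    [LocallyCompactSpace G] [T2Space G] [SigmaCompactSpace G]
    [MeasurableSpace G] [BorelSpace G]
    (ν ν' : Measure G) [IsFiniteMeasure ν] [IsFiniteMeasure ν'] [ν.Regular] [ν'.Regular]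
    (hsing : ν ⟂ₘ ν') (V : Set G) (hV : V ∈ 𝓝 (1 : G)) :
    ∃ (E : Set G) (N : Subgroup G) (lamN : Measure G),
      (∃ C : ℕ → Set G, (∀ n, IsCompact (C n)) ∧ E = ⋃ n, C n) ∧
      IsCompact (N : Set G) ∧ N.Normal ∧ (N : Set G) ⊆ V ∧
      localWeight (G ⧸ N) (QuotientGroup.mk 1) ≤ Cardinal.aleph0 ∧
      IsProbabilityMeasure lamN ∧ lamN ((N : Set G))ᶜ = 0 ∧
      (∀ g ∈ N, lamN.map (g * ·) = lamN) ∧ (∀ g ∈ N, lamN.map (· * g) = lamN) ∧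
      ν E = ν Set.univ ∧ ν' (E * (N : Set G)) = 0 ∧
      ν.mconv lamN ⟂ₘ ν'.mconv lamN := by
  classical
  obtain ⟨T, hTm, hνT, hν'Tc⟩ := hsing
  set S : Set G := Tᶜ with hSdef
  have hSm : MeasurableSet S := hTm.compl
  have hνScompl : ν Sᶜ = 0 := by rw [hSdef, compl_compl]; exact hνT
  have hν'S : ν' S = 0 := hν'Tc
  have hνS : ν S = ν Set.univ := by
    have h := measure_add_measure_compl (μ := ν) hSm
    rwa [hνScompl, add_zero] at h
  -- a K_σ set E ⊆ S of full ν-measure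
  have hc : ∀ k : ℕ, ∃ C : Set G, C ⊆ S ∧ IsCompact C ∧ ν S < ν C + (k : ℝ≥0∞)⁻¹ :=
    fun k => hSm.exists_isCompact_lt_add (measure_ne_top ν S)
      (ENNReal.inv_ne_zero.2 (ENNReal.natCast_ne_top k))
  choose C hCsub hCcomp hCν using hc
  set E : Set G := ⋃ k, C k with hEdef
  have hEm : MeasurableSet E :=
    MeasurableSet.iUnion fun k => (hCcomp k).isClosed.measurableSet
  have hνE : ν E = ν Set.univ := by
    refine le_antisymm (measure_mono (Set.subset_univ _)) ?_
    rw [← hνS]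
    refine ENNReal.le_of_forall_pos_le_add fun ε hε _ => ?_
    have hε' : ((ε : ℝ≥0∞)) ≠ 0 := by exact_mod_cast hε.ne'
    obtain ⟨n, hn⟩ := ENNReal.exists_inv_nat_lt hε'
    calc ν S ≤ ν (C n) + (n : ℝ≥0∞)⁻¹ := (hCν n).le
      _ ≤ ν E + ε := add_le_add (measure_mono (Set.subset_iUnion C n)) hn.le
  have hνEc : ν Eᶜ = 0 := by
    have h := measure_add_measure_compl (μ := ν) hEm
    rw [hνE] at h
    have h2 : ν Set.univ + ν Eᶜ = ν Set.univ + 0 := by rw [add_zero]; exact h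
    exact (ENNReal.add_right_inj (measure_ne_top ν _)).1 h2
  have hν'C : ∀ k, ν' (C k) = 0 := fun k => measure_mono_null (hCsub k) hν'S
  -- small open sets around the C k for ν'
  have ho : ∀ k m : ℕ, ∃ O : Set G, O ⊇ C k ∧ IsOpen O ∧ ν' O < (m : ℝ≥0∞)⁻¹ := by
    intro k m
    apply Set.exists_isOpen_lt_of_lt
    rw [hν'C k]
    exact ENNReal.inv_pos.2 (ENNReal.natCast_ne_top m)
  choose O hOsub hOopen hOν using ho
  have hsepW : ∀ k m : ℕ, ∃ Wn ∈ 𝓝 (1 : G), C k * Wn ⊆ O k m :=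
    fun k m => compact_open_separated_mul_right (hCcomp k) (hOopen k m) (hOsub k m)
  choose Wn hWnmem hWnsub using hsepW
  -- apply Kakutani–Kodaira
  set Wt : ℕ → Set G := fun n => V ∩ Wn n.unpair.1 n.unpair.2 with hWt
  have hWtmem : ∀ n, Wt n ∈ 𝓝 (1 : G) := fun n => Filter.inter_mem hV (hWnmem _ _)
  obtain ⟨N, hNcomp, hNnormal, hNW, U, hUnhds, hsep⟩ := kakutani_kodaira Wt hWtmem
  haveI := hNnormal
  have hNV : (N : Set G) ⊆ V := fun x hx => (hNW 0 hx).1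
  have hNWn : ∀ k m, (N : Set G) ⊆ Wn k m := by
    intro k m x hx
    have h := hNW (Nat.pair k m) hx
    rw [hWt] at h
    simpa [Nat.unpair_pair] using h.2
  -- ν' (E * N) = 0
  have hCkN : ∀ k, ν' (C k * (N : Set G)) = 0 := by
    intro k
    have hb : ∀ m : ℕ, ν' (C k * (N : Set G)) ≤ (m : ℝ≥0∞)⁻¹ := by
      intro m
      refine le_trans (measure_mono ?_) (hOν k m).le
      exact (Set.mul_subset_mul_left (hNWn k m)).trans (hWnsub k m)
    refine le_antisymm ?_ zero_le
    refine ENNReal.le_of_forall_pos_le_add fun ε hε _ => ?_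
    have hε' : ((ε : ℝ≥0∞)) ≠ 0 := by exact_mod_cast hε.ne'
    obtain ⟨n, hn⟩ := ENNReal.exists_inv_nat_lt hε'
    calc ν' (C k * (N : Set G)) ≤ (n : ℝ≥0∞)⁻¹ := hb n
      _ ≤ 0 + ε := by rw [zero_add]; exact hn.le
  have hENnull : ν' (E * (N : Set G)) = 0 := by
    rw [hEdef, Set.iUnion_mul]
    exact measure_iUnion_null hCkN
  have hENm : MeasurableSet (E * (N : Set G)) := by
    rw [hEdef, Set.iUnion_mul]
    exact MeasurableSet.iUnion fun k => ((hCcomp k).mul hNcomp).isClosed.measurableSet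
  -- the normalized Haar measure of N
  haveI : CompactSpace N := isCompact_iff_compactSpace.mp hNcomp
  haveI : Nonempty N := ⟨1⟩
  haveI : BorelSpace N := Subtype.borelSpace (N : Set G)
  set μN := Measure.haarMeasure (⊤ : TopologicalSpace.PositiveCompacts N) with hμN
  set lamN : Measure G := μN.map ((↑) : N → G) with hlam
  have hcoe : Measurable ((↑) : N → G) := continuous_subtype_val.measurable
  haveI hμNprob : IsProbabilityMeasure μN := by
    constructor
    rw [← TopologicalSpace.PositiveCompacts.coe_top]
    exact Measure.haarMeasure_self
  haveI hlamprob : IsProbabilityMeasure lamN := Measure.isProbabilityMeasure_map hcoe.aemeasurable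
  have hlamN : lamN ((N : Set G))ᶜ = 0 := by
    rw [hlam, Measure.map_apply hcoe hNcomp.isClosed.measurableSet.compl]
    convert measure_empty (μ := μN)
    ext x
    simp [x.2]
  have hleft : ∀ g ∈ N, lamN.map (g * ·) = lamN := by
    intro g hg
    rw [hlam, Measure.map_map (continuous_mul_left g).measurable hcoe]
    have hcomp : ((g * ·) ∘ ((↑) : N → G)) = ((↑) : N → G) ∘ ((⟨g, hg⟩ : N) * ·) := rfl
    rw [hcomp, ← Measure.map_map hcoe (continuous_mul_left (⟨g, hg⟩ : N)).measurable,
      map_mul_left_eq_self μN (⟨g, hg⟩ : N)]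
  have hright : ∀ g ∈ N, lamN.map (· * g) = lamN := by
    intro g hg
    rw [hlam, Measure.map_map (continuous_mul_right g).measurable hcoe]
    have hcomp : ((· * g) ∘ ((↑) : N → G)) = ((↑) : N → G) ∘ (· * (⟨g, hg⟩ : N)) := rfl
    rw [hcomp, ← Measure.map_map hcoe (continuous_mul_right (⟨g, hg⟩ : N)).measurable,
      haar_map_mul_right (⟨g, hg⟩ : N)]
  refine ⟨E, N, lamN, ⟨C, hCcomp, rfl⟩, hNcomp, hNnormal, hNV,
    localWeight_quotient_le N U hUnhds hsep, hlamprob, hlamN, hleft, hright, hνE, hENnull, ?_⟩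
  refine ⟨(E * (N : Set G))ᶜ, hENm.compl, ?_, ?_⟩
  · exact mconv_apply_eq_zero (s := E) (t := (N : Set G)) hENm.compl hνEc hlamN
      (fun x hx y hy hcon => hcon (Set.mul_mem_mul hx hy))
  · rw [compl_compl]
    refine mconv_apply_eq_zero (s := (E * (N : Set G))ᶜ) (t := (N : Set G)) hENm ?_ hlamN ?_
    · rw [compl_compl]; exact hENnull
    · intro x hx y hy hcon
      apply hx
      obtain ⟨e, he, n, hn, hmuleq⟩ := hcon
      refine ⟨e, he, n * y⁻¹, N.mul_mem hn (N.inv_mem hy), ?_⟩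
      have hmuleq' : e * n = x * y := hmuleq
      show e * (n * y⁻¹) = x
      rw [← mul_assoc, hmuleq', mul_inv_cancel_right]
end

section
/- Let G be a locally compact group, μ ∈ M(G) with μ ∗ δ_p ⊥ μ ∗ δ_{p'} for all distinct p, p' in an uncountable set P ⊆ G, and let D ⊆ M(G) be a set of measures with |D| < |P|. Then there exists x ∈ P such that μ ∗ δ_x is mutually singular to every measure in D. -/
open MeasureTheory

section aux

variable {α : Type*} [MeasurableSpace α]

lemma add_le_of_mutuallySingular {m m' ν : Measure α} (h1 : m ≤ ν) (h2 : m' ≤ ν)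
    (h : m ⟂ₘ m') : m + m' ≤ ν := by
  obtain ⟨t, ht, htm, htm'⟩ := h
  intro B
  have hsub : B ⊆ (B ∩ tᶜ) ∪ (B ∩ t) := by
    rw [← Set.inter_union_distrib_left, Set.compl_union_self, Set.inter_univ]
  have hmB : m B ≤ ν (B ∩ tᶜ) := by
    calc m B ≤ m (B ∩ tᶜ) + m (B ∩ t) := (measure_mono hsub).trans (measure_union_le _ _)
      _ = m (B ∩ tᶜ) := by simp [measure_mono_null Set.inter_subset_right htm]
      _ ≤ ν (B ∩ tᶜ) := h1 _
  have hm'B : m' B ≤ ν (B ∩ t) := by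
    calc m' B ≤ m' (B ∩ tᶜ) + m' (B ∩ t) := (measure_mono hsub).trans (measure_union_le _ _)
      _ = m' (B ∩ t) := by simp [measure_mono_null Set.inter_subset_right htm']
      _ ≤ ν (B ∩ t) := h2 _
  calc (m + m') B = m B + m' B := rfl
    _ ≤ ν (B ∩ tᶜ) + ν (B ∩ t) := add_le_add hmB hm'B
    _ = ν (B ∩ t) + ν (B \ t) := by rw [Set.diff_eq, add_comm]
    _ = ν B := measure_inter_add_diff B ht

lemma countable_ne_zero_of_pairwise_mutuallySingular {ι : Type*} {m : ι → Measure α}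
    {ν : Measure α} [IsFiniteMeasure ν] (hle : ∀ i, m i ≤ ν)
    (hpair : Pairwise fun i j => m i ⟂ₘ m j) : {i | m i ≠ 0}.Countable := by
  classical
  have hsum : ∀ s : Finset ι, (∑ i ∈ s, m i) ≤ ν := by
    intro s
    induction s using Finset.induction_on with
    | empty => simp [Measure.zero_le]
    | @insert a s ha ih =>
        rw [Finset.sum_insert ha]
        have hsing : m a ⟂ₘ ∑ i ∈ s, m i := by
          have : (∑ i ∈ s, m i) = Measure.sum (fun i : s => m i) := by
            rw [Measure.sum_fintype, ← Finset.sum_coe_sort]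
          rw [this, Measure.MutuallySingular.sum_right]
          exact fun i => hpair (fun h => ha (h ▸ i.2))
        simpa [add_comm] using add_le_of_mutuallySingular (hle a) ih hsing
  have htsum : ∑' i, m i Set.univ ≤ ν Set.univ := by
    rw [ENNReal.tsum_eq_iSup_sum]
    refine iSup_le fun s => ?_
    calc ∑ i ∈ s, m i Set.univ = (∑ i ∈ s, m i) Set.univ := by
          simp [Measure.finset_sum_apply]
      _ ≤ ν Set.univ := hsum s _
  have hfin : ∑' i, m i Set.univ ≠ ⊤ :=
    (lt_of_le_of_lt htsum (measure_lt_top ν _)).ne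
  have := Summable.countable_support_ennreal hfin
  refine this.mono ?_
  intro i hi
  simp only [Function.mem_support]
  simpa [Measure.measure_univ_eq_zero] using hi

end aux

/-- Let `μ ∈ M(G)` with `μ ∗ δ_p ⊥ μ ∗ δ_{p'}` for all distinct `p, p'`
in an uncountable set `P ⊆ G`, and let `D` be a set of bounded measures with `|D| < |P|`.
Then there is `x ∈ P` such that `μ ∗ δ_x` is mutually singular to every measure in `D`. -/
theorem stmt_14 {G : Type u} [Group G] [TopologicalSpace G] [IsTopologicalGroup G]
    [LocallyCompactSpace G] [T2Space G] [MeasurableSpace G] [BorelSpace G]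
    (μ : Measure G) [IsFiniteMeasure μ]
    (P : Set G) (hP : Cardinal.aleph0 < Cardinal.mk P)
    (hsing : P.Pairwise fun p p' => μ.map (· * p) ⟂ₘ μ.map (· * p'))
    (D : Set (Measure G)) (hDfin : ∀ ν ∈ D, IsFiniteMeasure ν)
    (hD : Cardinal.mk D < Cardinal.mk P) :
    ∃ x ∈ P, ∀ ν ∈ D, μ.map (· * x) ⟂ₘ ν := by
  classical
  -- for each ν ∈ D, the set of bad p is countable
  have key : ∀ ν ∈ D, {p : P | ¬ μ.map (· * (p : G)) ⟂ₘ ν}.Countable := by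
    intro ν hν
    haveI := hDfin ν hν
    -- measurability of translations
    have hmap_fin : ∀ p : G, IsFiniteMeasure (μ.map (· * p)) := by
      intro p
      exact Measure.isFiniteMeasure_map μ _
    set m : P → Measure G := fun p =>
      (μ.map (· * (p : G))).withDensity (ν.rnDeriv (μ.map (· * (p : G)))) with hm
    haveI : ∀ p : P, IsFiniteMeasure (μ.map (· * (p : G))) := fun p => hmap_fin p
    have hdecomp : ∀ p : P, ν = ν.singularPart (μ.map (· * (p : G))) + m p := by
      intro p
      exact (ν.haveLebesgueDecomposition_add (μ.map (· * (p : G))))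
    have hle : ∀ p : P, m p ≤ ν := by
      intro p
      conv_rhs => rw [hdecomp p]
      exact Measure.le_add_left le_rfl
    have hac : ∀ p : P, m p ≪ μ.map (· * (p : G)) := fun p =>
      MeasureTheory.withDensity_absolutelyContinuous _ _
    have hpair : Pairwise fun p q : P => m p ⟂ₘ m q := by
      intro p q hpq
      have h := hsing p.2 q.2 (fun h => hpq (Subtype.ext h))
      exact h.mono_ac (hac p) (hac q)
    have hcnt := countable_ne_zero_of_pairwise_mutuallySingular hle hpair
    refine hcnt.mono ?_
    intro p hp
    simp only [Set.mem_setOf_eq] at hp ⊢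
    intro hmz
    apply hp
    have : ν = ν.singularPart (μ.map (· * (p : G))) := by
      conv_lhs => rw [hdecomp p, hmz, add_zero]
    rw [this]
    exact (Measure.mutuallySingular_singularPart ν _).symm
  -- union of bad sets is small
  by_contra hcon
  push_neg at hcon
  have hcover : (Set.univ : Set P) ⊆ ⋃ ν : D, {p : P | ¬ μ.map (· * (p : G)) ⟂ₘ (ν : Measure G)} := by
    intro p _
    obtain ⟨ν, hν, hbad⟩ := hcon p p.2
    exact Set.mem_iUnion.2 ⟨⟨ν, hν⟩, hbad⟩
  have hcard : Cardinal.mk P ≤ Cardinal.mk D * Cardinal.aleph0 := by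
    calc Cardinal.mk P = Cardinal.mk (Set.univ : Set P) := (Cardinal.mk_univ).symm
      _ ≤ Cardinal.mk (⋃ ν : D, {p : P | ¬ μ.map (· * (p : G)) ⟂ₘ (ν : Measure G)}) :=
          Cardinal.mk_le_mk_of_subset hcover
      _ ≤ Cardinal.mk D * Cardinal.aleph0 := by
          refine (Cardinal.mk_iUnion_le _).trans ?_
          refine mul_le_mul' le_rfl (ciSup_le' fun ν => ?_)
          haveI := (key ν ν.2).to_subtype
          exact Cardinal.mk_le_aleph0
  have : Cardinal.mk D * Cardinal.aleph0 < Cardinal.mk P := by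
    rcases le_or_gt (Cardinal.mk D) Cardinal.aleph0 with h | h
    · calc Cardinal.mk D * Cardinal.aleph0 ≤ Cardinal.aleph0 * Cardinal.aleph0 :=
            mul_le_mul' h le_rfl
        _ = Cardinal.aleph0 := by simp
        _ < Cardinal.mk P := hP
    · calc Cardinal.mk D * Cardinal.aleph0 ≤ Cardinal.mk D * Cardinal.mk D :=
            mul_le_mul' le_rfl h.le
        _ = Cardinal.mk D := Cardinal.mul_eq_self h.le
        _ < Cardinal.mk P := hD
  exact absurd hcard (not_le.2 this)
end

section
/- Let M be a Banach algebra and M₁ a closed subspace such that there exists h ∈ M* with {𝔫 ⊙ h : 𝔫 ∈ unit ball of M**} ⊇ unit ball of M₁° (the annihilator of M₁). Then the left topological centre Z_t(M**) is contained in M + M₁**, where M₁** is identified with the double annihilator M₁°° in M**. -/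
open NormedSpace ContinuousLinearMap

open Topology Filter

variable (M : Type*) [NonUnitalNormedRing M] [NormedSpace ℝ M]
  [IsScalarTower ℝ M M] [SMulCommClass ℝ M M]

/-- The right action of `M` on `M*`: `⟨h · μ, ν⟩ = ⟨h, μ ∗ ν⟩`. -/
noncomputable def hdot (h : StrongDual ℝ M) (μ : M) : StrongDual ℝ M :=
  h.comp (mul ℝ M μ)

/-- The left action `⊙` of `M**` on `M*`: `⟨𝔫 ⊙ h, μ⟩ = ⟨𝔫, h · μ⟩`. -/
noncomputable def odot (n : StrongDual ℝ (StrongDual ℝ M)) (h : StrongDual ℝ M) : StrongDual ℝ M :=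
  LinearMap.mkContinuous
    { toFun := fun μ => n (hdot M h μ)
      map_add' := fun x y => by simp [hdot, map_add, ContinuousLinearMap.comp_add]
      map_smul' := fun c x => by simp [hdot, map_smul, ContinuousLinearMap.comp_smul] }
    (‖n‖ * ‖h‖)
    (fun μ => by
      calc ‖n (hdot M h μ)‖ ≤ ‖n‖ * ‖hdot M h μ‖ := n.le_opNorm _
        _ ≤ ‖n‖ * (‖h‖ * ‖μ‖) := by
            refine mul_le_mul_of_nonneg_left ?_ (norm_nonneg n)
            calc ‖hdot M h μ‖ ≤ ‖h‖ * ‖mul ℝ M μ‖ := opNorm_comp_le _ _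
              _ ≤ ‖h‖ * ‖μ‖ :=
                mul_le_mul_of_nonneg_left (opNorm_mul_apply_le ℝ M μ) (norm_nonneg h)
        _ = ‖n‖ * ‖h‖ * ‖μ‖ := (mul_assoc _ _ _).symm)

@[simp] lemma odot_apply (n : StrongDual ℝ (StrongDual ℝ M)) (h : StrongDual ℝ M) (μ : M) :
    odot M n h μ = n (hdot M h μ) := rfl

lemma odot_norm_le (n : StrongDual ℝ (StrongDual ℝ M)) (h : StrongDual ℝ M) :
    ‖odot M n h‖ ≤ ‖n‖ * ‖h‖ :=
  LinearMap.mkContinuous_norm_le _ (by positivity) _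

/-- The first (left) Arens product on `M**`: `⟨𝔪 □ 𝔫, h⟩ = ⟨𝔪, 𝔫 ⊙ h⟩`. -/
noncomputable def arens (m n : StrongDual ℝ (StrongDual ℝ M)) : StrongDual ℝ (StrongDual ℝ M) :=
  LinearMap.mkContinuous
    { toFun := fun h => m (odot M n h)
      map_add' := fun h h' => by
        have : odot M n (h + h') = odot M n h + odot M n h' := by
          ext μ; simp [hdot, ContinuousLinearMap.add_comp]
        show m (odot M n (h + h')) = m (odot M n h) + m (odot M n h')
        rw [this, map_add]
      map_smul' := fun c h => by
        have : odot M n (c • h) = c • odot M n h := by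
          ext μ; simp [hdot, ContinuousLinearMap.smul_comp]
        show m (odot M n (c • h)) = (RingHom.id ℝ) c • m (odot M n h)
        rw [this, map_smul]; rfl }
    (‖m‖ * ‖n‖)
    (fun h => by
      calc ‖m (odot M n h)‖ ≤ ‖m‖ * ‖odot M n h‖ := m.le_opNorm _
        _ ≤ ‖m‖ * (‖n‖ * ‖h‖) :=
            mul_le_mul_of_nonneg_left (odot_norm_le M n h) (norm_nonneg m)
        _ = ‖m‖ * ‖n‖ * ‖h‖ := (mul_assoc _ _ _).symm)

@[simp] lemma arens_apply (m n : StrongDual ℝ (StrongDual ℝ M)) (h : StrongDual ℝ M) :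
    arens M m n h = m (odot M n h) := rfl

set_option linter.unusedSectionVars false

variable {M} in
/-- If `g` annihilates `M₁`, then `|g ν| ≤ ‖g‖ * ‖ν + M₁‖` in the quotient seminorm. -/
lemma aux_abs_le (M₁ : Submodule ℝ M) {g : StrongDual ℝ M} (hg : ∀ ν ∈ M₁, g ν = 0) (ν : M) :
    |g ν| ≤ ‖g‖ * ‖(Submodule.Quotient.mk ν : M ⧸ M₁)‖ := by
  refine le_of_forall_pos_le_add fun δ hδ => ?_
  have hε : (0:ℝ) < δ / (‖g‖ + 1) := by positivity
  obtain ⟨m', hm', hlt⟩ :=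
    Submodule.Quotient.norm_mk_lt (Submodule.Quotient.mk ν : M ⧸ M₁) hε
  have hmem : m' - ν ∈ M₁ := (Submodule.Quotient.eq M₁).1 hm'
  have hgm : g m' = g ν := by
    have := hg _ hmem
    rw [map_sub] at this
    linarith
  have h1 : |g ν| ≤ ‖g‖ * ‖m'‖ := by rw [← hgm]; exact g.le_opNorm m'
  have h2 : ‖g‖ * ‖m'‖ ≤ ‖g‖ * (‖(Submodule.Quotient.mk ν : M ⧸ M₁)‖ + δ / (‖g‖ + 1)) :=
    mul_le_mul_of_nonneg_left hlt.le (norm_nonneg g)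
  have h3 : ‖g‖ * (δ / (‖g‖ + 1)) ≤ δ := by
    rw [mul_div_assoc']
    rw [div_le_iff₀ (by positivity)]
    nlinarith [norm_nonneg g, hδ.le]
  nlinarith [norm_nonneg g]

variable {M} in
/-- Converse: the quotient norm is bounded by the sup over unit-ball annihilator functionals. -/
lemma aux_norm_quot_le [CompleteSpace M] (M₁ : Submodule ℝ M) (hM₁ : IsClosed (M₁ : Set M))
    (ν : M) {c : ℝ} (hc : 0 ≤ c)
    (hb : ∀ g : StrongDual ℝ M, ‖g‖ ≤ 1 → (∀ w ∈ M₁, g w = 0) → |g ν| ≤ c) :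
    ‖(Submodule.Quotient.mk ν : M ⧸ M₁)‖ ≤ c := by
  haveI := hM₁
  by_cases hq : (Submodule.Quotient.mk ν : M ⧸ M₁) = 0
  · rw [hq, norm_zero]; exact hc
  · obtain ⟨G, hG1, hG2⟩ := exists_dual_vector ℝ (Submodule.Quotient.mk ν : M ⧸ M₁) (norm_ne_zero_iff.mpr hq)
    -- quotient map as a continuous linear map of norm ≤ 1
    let q : M →L[ℝ] M ⧸ M₁ :=
      LinearMap.mkContinuous M₁.mkQ 1 (fun x => by
        simpa using Submodule.Quotient.norm_mk_le M₁ x)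
    have hqnorm : ‖q‖ ≤ 1 := LinearMap.mkContinuous_norm_le _ zero_le_one _
    set g : StrongDual ℝ M := G.comp q with hgdef
    have hgnorm : ‖g‖ ≤ 1 := by
      calc ‖g‖ ≤ ‖G‖ * ‖q‖ := opNorm_comp_le _ _
        _ ≤ 1 * 1 := by rw [hG1]; exact mul_le_mul_of_nonneg_left hqnorm zero_le_one
        _ = 1 := one_mul 1
    have hgann : ∀ w ∈ M₁, g w = 0 := by
      intro w hw
      have : q w = 0 := by
        show M₁.mkQ w = 0
        simpa [Submodule.mkQ_apply] using (Submodule.Quotient.mk_eq_zero M₁).2 hw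
      simp [hgdef, this]
    have : g ν = ‖(Submodule.Quotient.mk ν : M ⧸ M₁)‖ := by
      have : q ν = Submodule.Quotient.mk ν := rfl
      simp [hgdef, this, hG2]
    calc ‖(Submodule.Quotient.mk ν : M ⧸ M₁)‖ = g ν := this.symm
      _ ≤ |g ν| := le_abs_self _
      _ ≤ c := hb g hgnorm hgann


lemma aux_extract (M₁ : Submodule ℝ M) (h : StrongDual ℝ M)
    (hfact : ∀ g : StrongDual ℝ M, ‖g‖ ≤ 1 → (∀ ν ∈ M₁, g ν = 0) →
      ∃ n : StrongDual ℝ (StrongDual ℝ M), ‖n‖ ≤ 1 ∧ odot M n h = g)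
    (m : StrongDual ℝ (StrongDual ℝ M))
    (hm : Continuous fun n : WeakDual ℝ (StrongDual ℝ M) =>
      StrongDual.toWeakDual (arens M m (WeakDual.toStrongDual n)))
    {ε : ℝ} (hε : 0 < ε) :
    ∃ I : Set M, I.Finite ∧ ∀ g : StrongDual ℝ M, ‖g‖ ≤ 1 → (∀ ν ∈ M₁, g ν = 0) →
      (∀ μ ∈ I, g μ = 0) → |m g| ≤ ε := by
  classical
  have hc : Continuous fun n : WeakDual ℝ (StrongDual ℝ M) =>
      m (odot M (WeakDual.toStrongDual n) h) :=
    (WeakDual.eval_continuous h).comp hm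
  set R : WeakDual ℝ (StrongDual ℝ M) → WeakDual ℝ M :=
    fun n => StrongDual.toWeakDual (odot M (WeakDual.toStrongDual n) h) with hRdef
  have hR : Continuous R :=
    WeakDual.continuous_of_continuous_eval fun μ => WeakDual.eval_continuous (hdot M h μ)
  set W : Set (WeakDual ℝ (StrongDual ℝ M)) :=
    (WeakDual.toStrongDual ⁻¹' Metric.closedBall 0 1) ∩
      ({n | ∀ ν ∈ M₁, R n ν = 0} ∩ ({n | ∀ μ : M, |R n μ| ≤ ‖μ‖} ∩
        {n | ε ≤ |m (odot M (WeakDual.toStrongDual n) h)|})) with hWdef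
  have hWc : IsCompact W := by
    refine (WeakDual.isCompact_closedBall (0 : StrongDual ℝ (StrongDual ℝ M)) 1).inter_right ?_
    refine IsClosed.inter ?_ (IsClosed.inter ?_ ?_)
    · have heq : {n : WeakDual ℝ (StrongDual ℝ M) | ∀ ν ∈ M₁, R n ν = 0}
          = ⋂ ν ∈ (M₁ : Set M), {n : WeakDual ℝ (StrongDual ℝ M) | R n ν = 0} := by
        ext n; simp
      rw [heq]
      exact isClosed_biInter fun ν _ =>
        isClosed_eq (WeakDual.eval_continuous (hdot M h ν)) continuous_const
    · have heq : {n : WeakDual ℝ (StrongDual ℝ M) | ∀ μ : M, |R n μ| ≤ ‖μ‖}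
          = ⋂ μ : M, {n : WeakDual ℝ (StrongDual ℝ M) | |R n μ| ≤ ‖μ‖} := by
        ext n; simp
      rw [heq]
      exact isClosed_iInter fun μ =>
        isClosed_le (continuous_abs.comp (WeakDual.eval_continuous (hdot M h μ)))
          continuous_const
    · exact isClosed_le continuous_const (continuous_abs.comp hc)
  set V : Set (WeakDual ℝ M) := R '' W with hVdef
  have hVc : IsCompact V := hWc.image hR
  have h0 : (0 : WeakDual ℝ M) ∉ V := by
    rintro ⟨n, hn, hRn⟩
    have h1 : odot M (WeakDual.toStrongDual n) h = 0 :=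
      StrongDual.toWeakDual.injective hRn
    have h2 : ε ≤ |m (odot M (WeakDual.toStrongDual n) h)| := hn.2.2.2
    rw [h1, map_zero, abs_zero] at h2
    exact absurd h2 (not_le.mpr hε)
  have hmem : Vᶜ ∈ 𝓝 (0 : WeakDual ℝ M) := hVc.isClosed.isOpen_compl.mem_nhds h0
  have hemb : IsEmbedding fun (x : WeakDual ℝ M) (y : M) => x y :=
    WeakBilin.isEmbedding ContinuousLinearMap.coe_injective
  rw [hemb.toIsInducing.nhds_eq_comap, Filter.mem_comap] at hmem
  obtain ⟨t, ht, hts⟩ := hmem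
  have h0fun : (fun y : M => (0 : WeakDual ℝ M) y) = (0 : M → ℝ) := by
    funext y; rfl
  rw [h0fun, nhds_pi, Filter.mem_pi] at ht
  obtain ⟨I, hIfin, u, hu, hIu⟩ := ht
  refine ⟨I, hIfin, ?_⟩
  intro g hg1 hg2 hg3
  by_contra hlt
  push_neg at hlt
  obtain ⟨n, hn1, hn2⟩ := hfact g hg1 hg2
  have hginV : StrongDual.toWeakDual g ∈ V := by
    refine ⟨StrongDual.toWeakDual n, ?_, ?_⟩
    · refine ⟨by show dist n 0 ≤ 1; exact (dist_zero_right n).le.trans hn1, ?_, ?_, ?_⟩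
      · intro ν hν
        show odot M n h ν = 0
        rw [hn2]; exact hg2 ν hν
      · intro μ
        show |odot M n h μ| ≤ ‖μ‖
        rw [hn2]
        calc |g μ| ≤ ‖g‖ * ‖μ‖ := g.le_opNorm μ
          _ ≤ 1 * ‖μ‖ := mul_le_mul_of_nonneg_right hg1 (norm_nonneg μ)
          _ = ‖μ‖ := one_mul _
      · show ε ≤ |m (odot M n h)|
        rw [hn2]; exact hlt.le
    · show StrongDual.toWeakDual (odot M n h) = StrongDual.toWeakDual g
      rw [hn2]
  have hginC : StrongDual.toWeakDual g ∈ Vᶜ := by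
    apply hts
    apply hIu
    intro μ hμ
    have : (StrongDual.toWeakDual g) μ = 0 := hg3 μ hμ
    show (fun y : M => (StrongDual.toWeakDual g) y) μ ∈ u μ
    simp only [this]
    exact mem_of_mem_nhds (by simpa using hu μ)
  exact hginC hginV

lemma aux_approx (M₁ : Submodule ℝ M) (h : StrongDual ℝ M)
    (hfact : ∀ g : StrongDual ℝ M, ‖g‖ ≤ 1 → (∀ ν ∈ M₁, g ν = 0) →
      ∃ n : StrongDual ℝ (StrongDual ℝ M), ‖n‖ ≤ 1 ∧ odot M n h = g)
    (m : StrongDual ℝ (StrongDual ℝ M))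
    (hm : Continuous fun n : WeakDual ℝ (StrongDual ℝ M) =>
      StrongDual.toWeakDual (arens M m (WeakDual.toStrongDual n)))
    {ε : ℝ} (hε : 0 < ε) :
    ∃ μ' : M, ∀ g : StrongDual ℝ M, (∀ ν ∈ M₁, g ν = 0) → |m g - g μ'| ≤ ε * ‖g‖ := by
  classical
  obtain ⟨I, hIfin, hI⟩ := aux_extract M M₁ h hfact m hm hε
  have hscale : ∀ g : StrongDual ℝ M, (∀ ν ∈ M₁, g ν = 0) → (∀ μ ∈ I, g μ = 0) →
      |m g| ≤ ε * ‖g‖ := by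
    intro g hg hgI
    rcases eq_or_ne g 0 with rfl | hg0
    · simp
    · have hpos : 0 < ‖g‖ := norm_pos_iff.mpr hg0
      have h1 : ‖(‖g‖⁻¹ • g)‖ ≤ 1 := by
        rw [norm_smul, norm_inv, norm_norm, inv_mul_cancel₀ hpos.ne']
      have h2 : ∀ ν ∈ M₁, (‖g‖⁻¹ • g) ν = 0 := fun ν hν => by
        simp [ContinuousLinearMap.smul_apply, hg ν hν]
      have h3 : ∀ μ ∈ I, (‖g‖⁻¹ • g) μ = 0 := fun μ hμ => by
        simp [ContinuousLinearMap.smul_apply, hgI μ hμ]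
      have := hI _ h1 h2 h3
      rw [map_smul, smul_eq_mul, abs_mul, abs_inv, abs_norm] at this
      calc |m g| = ‖g‖ * (‖g‖⁻¹ * |m g|) := by field_simp
        _ ≤ ‖g‖ * ε := mul_le_mul_of_nonneg_left this (norm_nonneg g)
        _ = ε * ‖g‖ := mul_comm _ _
  -- the subspaces
  letI : SeminormedAddCommGroup (StrongDual ℝ M) := ContinuousLinearMap.toSeminormedAddCommGroup
  let Y : Submodule ℝ (StrongDual ℝ M) :=
    { carrier := {g | ∀ ν ∈ M₁, g ν = 0}
      add_mem' := fun ha hb => fun ν hν => by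
        simp [ContinuousLinearMap.add_apply, ha ν hν, hb ν hν]
      zero_mem' := fun ν hν => rfl
      smul_mem' := fun c g hg => fun ν hν => by
        simp [ContinuousLinearMap.smul_apply, hg ν hν] }
  let S : Submodule ℝ (StrongDual ℝ M) :=
    { carrier := {g | (∀ ν ∈ M₁, g ν = 0) ∧ ∀ μ ∈ I, g μ = 0}
      add_mem' := fun ha hb =>
        ⟨fun ν hν => by simp [ContinuousLinearMap.add_apply, ha.1 ν hν, hb.1 ν hν],
         fun μ hμ => by simp [ContinuousLinearMap.add_apply, ha.2 μ hμ, hb.2 μ hμ]⟩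
      zero_mem' := ⟨fun ν hν => rfl, fun μ hμ => rfl⟩
      smul_mem' := fun c g hg =>
        ⟨fun ν hν => by simp [ContinuousLinearMap.smul_apply, hg.1 ν hν],
         fun μ hμ => by simp [ContinuousLinearMap.smul_apply, hg.2 μ hμ]⟩ }
  let f : S →L[ℝ] ℝ := m.comp S.subtypeL
  have hfnorm : ‖f‖ ≤ ε := by
    refine ContinuousLinearMap.opNorm_le_bound f hε.le fun x => ?_
    exact hscale (x : StrongDual ℝ M) x.2.1 x.2.2
  obtain ⟨Ψ, hΨext, hΨnorm⟩ := exists_extension_norm_eq S f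
  have hΨle : ‖Ψ‖ ≤ ε := hΨnorm ▸ hfnorm
  -- restrictions to Y as plain linear maps
  let K : Y →ₗ[ℝ] ℝ :=
    { toFun := fun g => m (g : StrongDual ℝ M) - Ψ (g : StrongDual ℝ M)
      map_add' := fun a b => by simp; ring
      map_smul' := fun c a => by simp; ring }
  let L : I → (Y →ₗ[ℝ] ℝ) := fun i =>
    { toFun := fun g => (g : StrongDual ℝ M) (i : M)
      map_add' := fun a b => by simp
      map_smul' := fun c a => by simp }
  haveI : Finite I := hIfin.to_subtype
  have hker : ⨅ i, LinearMap.ker (L i) ≤ LinearMap.ker K := by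
    intro g hg
    simp only [Submodule.mem_iInf, LinearMap.mem_ker] at hg ⊢
    have hgS : (g : StrongDual ℝ M) ∈ S := ⟨g.2, fun μ hμ => hg ⟨μ, hμ⟩⟩
    have : Ψ (g : StrongDual ℝ M) = f ⟨(g : StrongDual ℝ M), hgS⟩ := hΨext ⟨(g : StrongDual ℝ M), hgS⟩
    show m (g : StrongDual ℝ M) - Ψ (g : StrongDual ℝ M) = 0
    rw [this]
    show m (g : StrongDual ℝ M) - m (g : StrongDual ℝ M) = 0
    ring
  have hspan := mem_span_of_iInf_ker_le_ker hker
  haveI : Fintype I := hIfin.fintype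
  obtain ⟨c, hc⟩ := (Submodule.mem_span_range_iff_exists_fun ℝ).1 hspan
  refine ⟨∑ i : I, c i • (i : M), ?_⟩
  intro g hg
  have hgY : g ∈ Y := hg
  have hKg : K ⟨g, hgY⟩ = m g - Ψ g := rfl
  have hKg' : K ⟨g, hgY⟩ = g (∑ i : I, c i • (i : M)) := by
    rw [← hc]
    simp only [LinearMap.coe_sum, Finset.sum_apply, LinearMap.smul_apply, smul_eq_mul]
    rw [map_sum]
    congr 1
    funext i
    simp [L, map_smul]
  have key : m g - Ψ g = g (∑ i : I, c i • (i : M)) := by rw [← hKg, hKg']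
  have : m g - g (∑ i : I, c i • (i : M)) = Ψ g := by linarith
  rw [this]
  calc |Ψ g| ≤ ‖Ψ‖ * ‖g‖ := Ψ.le_opNorm g
    _ ≤ ε * ‖g‖ := mul_le_mul_of_nonneg_right hΨle (norm_nonneg g)


/-- Let `M` be a Banach algebra and `M₁` a closed subspace such that some
`h ∈ M*` satisfies `{𝔫 ⊙ h : 𝔫 ∈ unit ball of M**} ⊇ unit ball of M₁°`. Then every element
`m` of the left topological centre of `M**` (i.e. `n ↦ m □ n` is weak*-weak* continuous)
lies in `M + M₁**`: there is `μ ∈ M` with `m - ι μ` vanishing on the annihilator `M₁°`,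
i.e. `m - ι μ ∈ M₁°° = M₁**`. -/
theorem stmt_17 [CompleteSpace M] (M₁ : Submodule ℝ M) (hM₁ : IsClosed (M₁ : Set M))
    (h : StrongDual ℝ M)
    (hfact : ∀ g : StrongDual ℝ M, ‖g‖ ≤ 1 → (∀ ν ∈ M₁, g ν = 0) →
      ∃ n : StrongDual ℝ (StrongDual ℝ M), ‖n‖ ≤ 1 ∧ odot M n h = g)
    (m : StrongDual ℝ (StrongDual ℝ M))
    (hm : Continuous fun n : WeakDual ℝ (StrongDual ℝ M) =>
      StrongDual.toWeakDual (arens M m (WeakDual.toStrongDual n))) :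
    ∃ μ : M, ∀ g : StrongDual ℝ M, (∀ ν ∈ M₁, g ν = 0) → m g = g μ := by

  classical
  haveI := hM₁
  -- a sequence of approximants
  have hchoice : ∀ j : ℕ, ∃ μ' : M, ∀ g : StrongDual ℝ M, (∀ ν ∈ M₁, g ν = 0) →
      |m g - g μ'| ≤ ((j : ℝ) + 1)⁻¹ * ‖g‖ := fun j =>
    aux_approx M M₁ h hfact m hm (by positivity)
  choose μs hμs using hchoice
  -- quotient norm bounds
  have hquot : ∀ j l : ℕ, ‖(Submodule.Quotient.mk (μs j - μs l) : M ⧸ M₁)‖ ≤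
      ((j : ℝ) + 1)⁻¹ + ((l : ℝ) + 1)⁻¹ := by
    intro j l
    refine aux_norm_quot_le M₁ hM₁ _ (by positivity) ?_
    intro g hg1 hg2
    have h1 := hμs j g hg2
    have h2 := hμs l g hg2
    have : g (μs j - μs l) = (m g - g (μs l)) - (m g - g (μs j)) := by
      rw [map_sub]; ring
    rw [this]
    calc |(m g - g (μs l)) - (m g - g (μs j))| ≤ |m g - g (μs l)| + |m g - g (μs j)| :=
          abs_sub _ _
      _ ≤ ((l : ℝ) + 1)⁻¹ * ‖g‖ + ((j : ℝ) + 1)⁻¹ * ‖g‖ := add_le_add h2 h1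
      _ ≤ ((l : ℝ) + 1)⁻¹ * 1 + ((j : ℝ) + 1)⁻¹ * 1 := by
          gcongr <;> positivity
      _ = ((j : ℝ) + 1)⁻¹ + ((l : ℝ) + 1)⁻¹ := by ring
  -- Cauchy in the quotient
  have hcauchy : CauchySeq (fun j => (Submodule.Quotient.mk (μs j) : M ⧸ M₁)) := by
    refine cauchySeq_of_le_tendsto_0 (fun N => 2 * ((N : ℝ) + 1)⁻¹) ?_ ?_
    · intro n l N hn hl
      rw [dist_eq_norm]
      have : (Submodule.Quotient.mk (μs n) : M ⧸ M₁) - Submodule.Quotient.mk (μs l) =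
          Submodule.Quotient.mk (μs n - μs l) := by
        simp [Submodule.Quotient.mk_sub]
      rw [this]
      refine le_trans (hquot n l) ?_
      have e1 : ((n : ℝ) + 1)⁻¹ ≤ ((N : ℝ) + 1)⁻¹ := by
        apply inv_anti₀ (by positivity)
        have : (N:ℝ) ≤ n := by exact_mod_cast hn
        linarith
      have e2 : ((l : ℝ) + 1)⁻¹ ≤ ((N : ℝ) + 1)⁻¹ := by
        apply inv_anti₀ (by positivity)
        have : (N:ℝ) ≤ l := by exact_mod_cast hl
        linarith
      linarith
    · have : Tendsto (fun N : ℕ => ((N : ℝ) + 1)⁻¹) atTop (nhds 0) :=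
        tendsto_one_div_add_atTop_nhds_zero_nat.congr (by intro n; rw [one_div])
      have := this.const_mul 2
      simpa using this
  obtain ⟨x, hx⟩ := cauchySeq_tendsto_of_complete hcauchy
  obtain ⟨μ, rfl⟩ := Submodule.Quotient.mk_surjective M₁ x
  refine ⟨μ, ?_⟩
  intro g hg
  have hnorm0 : Tendsto (fun j => ‖(Submodule.Quotient.mk (μs j) : M ⧸ M₁) -
      Submodule.Quotient.mk μ‖) atTop (nhds 0) := by
    rw [← tendsto_iff_norm_sub_tendsto_zero]
    exact hx
  have hbound : ∀ j : ℕ, |m g - g μ| ≤ ((j : ℝ) + 1)⁻¹ * ‖g‖ +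
      ‖g‖ * ‖(Submodule.Quotient.mk (μs j) : M ⧸ M₁) - Submodule.Quotient.mk μ‖ := by
    intro j
    have h1 := hμs j g hg
    have h2 : |g (μs j) - g μ| ≤ ‖g‖ *
        ‖(Submodule.Quotient.mk (μs j) : M ⧸ M₁) - Submodule.Quotient.mk μ‖ := by
      have := aux_abs_le M₁ hg (μs j - μ)
      rw [map_sub] at this
      have e : (Submodule.Quotient.mk (μs j - μ) : M ⧸ M₁) =
          Submodule.Quotient.mk (μs j) - Submodule.Quotient.mk μ := by
        simp [Submodule.Quotient.mk_sub]
      rwa [e] at this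
    calc |m g - g μ| = |(m g - g (μs j)) + (g (μs j) - g μ)| := by ring_nf
      _ ≤ |m g - g (μs j)| + |g (μs j) - g μ| := abs_add_le _ _
      _ ≤ ((j : ℝ) + 1)⁻¹ * ‖g‖ + ‖g‖ *
          ‖(Submodule.Quotient.mk (μs j) : M ⧸ M₁) - Submodule.Quotient.mk μ‖ :=
        add_le_add h1 h2
  have htend : Tendsto (fun j : ℕ => ((j : ℝ) + 1)⁻¹ * ‖g‖ +
      ‖g‖ * ‖(Submodule.Quotient.mk (μs j) : M ⧸ M₁) - Submodule.Quotient.mk μ‖)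
      atTop (nhds 0) := by
    have t1 : Tendsto (fun j : ℕ => ((j : ℝ) + 1)⁻¹ * ‖g‖) atTop (nhds 0) := by
      have : Tendsto (fun N : ℕ => ((N : ℝ) + 1)⁻¹) atTop (nhds 0) :=
        tendsto_one_div_add_atTop_nhds_zero_nat.congr (by intro n; rw [one_div])
      simpa using this.mul_const ‖g‖
    have t2 := hnorm0.const_mul ‖g‖
    simpa using t1.add t2
  have : |m g - g μ| ≤ 0 := ge_of_tendsto' htend hbound
  have := abs_nonpos_iff.mp this
  linarith [sub_eq_zero.mp this]
end

section
/- Let G be a Polish group that is not locally compact, and let μ be a finite Borel measure on G. Then μ is 2^{ℵ₀}-thin: there exists a set P ⊆ G with |P| = 2^{ℵ₀} such that the right translates μ ∗ δ_p and μ ∗ δ_{p'} are mutually singular for all distinct p, p' ∈ P. -/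
open MeasureTheory Topology Metric Set Filter Pointwise

section Aux

/-- Union of two sets with empty interior, first closed, has empty interior. -/
lemma interior_union_eq_empty {X : Type*} [TopologicalSpace X] {A B : Set X}
    (hA : IsClosed A) (hiA : interior A = ∅) (hiB : interior B = ∅) :
    interior (A ∪ B) = ∅ := by
  have h1 : interior (A ∪ B) \ A ⊆ B := fun x hx => (interior_subset hx.1).resolve_left hx.2
  have h2 : interior (A ∪ B) \ A ⊆ interior B :=
    interior_maximal h1 (isOpen_interior.sdiff hA)
  rw [hiB] at h2
  have h2' : interior (A ∪ B) ⊆ A := fun x hx =>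
    Classical.byContradiction fun hxa => h2 ⟨hx, hxa⟩
  have h3 : interior (A ∪ B) ⊆ interior A := interior_maximal h2' isOpen_interior
  rw [hiA] at h3
  exact Set.eq_empty_iff_forall_notMem.2 fun x hx => h3 hx

lemma interior_biUnion_finset_eq_empty {X : Type*} [TopologicalSpace X] {ι : Type*}
    (S : Finset ι) (T : ι → Set X) (hc : ∀ i, IsClosed (T i)) (hi : ∀ i, interior (T i) = ∅) :
    interior (⋃ i ∈ S, T i) = ∅ := by
  classical
  induction S using Finset.induction_on with
  | empty => simp
  | @insert a S ha ih =>
      rw [Finset.set_biUnion_insert]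
      exact interior_union_eq_empty (hc a) (hi a) ih

end Aux

section Indep

variable {G : Type*} [Group G] [MetricSpace G] [IsTopologicalGroup G]

lemma exists_indep_points {F : Set G} (hFc : IsClosed F) (hFi : interior F = ∅)
    (hFs : ∀ z ∈ F, z⁻¹ ∈ F) {ι : Type*} (S : Finset ι) (c : ι → G) (ρ : ι → ℝ)
    (hρ : ∀ i, 0 < ρ i) :
    ∃ y : ι → G, (∀ i, y i ∈ ball (c i) (ρ i)) ∧
      ∀ i ∈ S, ∀ j ∈ S, i ≠ j → y i * (y j)⁻¹ ∉ F := by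
  classical
  induction S using Finset.induction_on with
  | empty => exact ⟨c, fun i => mem_ball_self (hρ i), by simp⟩
  | @insert a S ha ih =>
      obtain ⟨y, hy1, hy2⟩ := ih
      set B : Set G := ⋃ j ∈ S, (fun g => g * (y j)⁻¹) ⁻¹' F with hB
      have hBc : ∀ j : ι, IsClosed ((fun g => g * (y j)⁻¹) ⁻¹' F) := fun j =>
        hFc.preimage (continuous_mul_right _)
      have hBi : ∀ j : ι, interior ((fun g => g * (y j)⁻¹) ⁻¹' F) = ∅ := by
        intro j
        have : (fun g : G => g * (y j)⁻¹) ⁻¹' F = (Homeomorph.mulRight (y j)⁻¹) ⁻¹' F := rfl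
        rw [this, ← Homeomorph.preimage_interior, hFi, Set.preimage_empty]
      have hBint : interior B = ∅ := interior_biUnion_finset_eq_empty S _ hBc hBi
      have hball : ¬ ball (c a) (ρ a) ⊆ B := by
        intro h
        have := interior_maximal h isOpen_ball
        rw [hBint, Set.subset_empty_iff] at this
        exact absurd (mem_ball_self (hρ a)) (by rw [this]; exact fun h => h)
      obtain ⟨p, hpball, hpB⟩ := Set.not_subset.1 hball
      refine ⟨Function.update y a p, ?_, ?_⟩
      · intro i
        by_cases hia : i = a
        · subst hia; rwa [Function.update_self]
        · rw [Function.update_of_ne hia]; exact hy1 i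
      · intro i hi j hj hij
        have hnotin : ∀ j ∈ S, p * (y j)⁻¹ ∉ F := by
          intro j hj hcon
          exact hpB (Set.mem_biUnion hj hcon)
        rcases Finset.mem_insert.1 hi with rfl | hiS
        · rcases Finset.mem_insert.1 hj with rfl | hjS
          · exact absurd rfl hij
          · rw [Function.update_self, Function.update_of_ne (fun h => ha (by rwa [h] at hjS))]
            exact hnotin j hjS
        · rcases Finset.mem_insert.1 hj with rfl | hjS
          · rw [Function.update_self, Function.update_of_ne (fun h => ha (by rwa [h] at hiS))]
            intro hcon
            have := hFs _ hcon
            rw [mul_inv_rev, inv_inv] at this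
            exact hnotin i hiS this
          · rw [Function.update_of_ne (fun h => ha (by rwa [h] at hiS)),
              Function.update_of_ne (fun h => ha (by rwa [h] at hjS))]
            exact hy2 i hiS j hjS hij

lemma step_core {F : Set G} (hFc : IsClosed F) (hFi : interior F = ∅)
    (hFs : ∀ z ∈ F, z⁻¹ ∈ F) {ι : Type*} [Fintype ι] (c : ι → G) (ρ : ι → ℝ)
    (hρ : ∀ i, 0 < ρ i) (δ : ℝ) (hδ : 0 < δ) :
    ∃ (y : ι → G) (ε : ℝ), 0 < ε ∧ ε ≤ δ ∧
      (∀ i, closedBall (y i) ε ⊆ ball (c i) (ρ i)) ∧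
      ∀ i j, i ≠ j → ∀ u ∈ closedBall (y i) ε, ∀ v ∈ closedBall (y j) ε, u * v⁻¹ ∉ F := by
  classical
  obtain ⟨y, hy1, hy2⟩ := exists_indep_points hFc hFi hFs Finset.univ c ρ hρ
  set V : Set (ι → G) := {z | (∀ i, z i ∈ ball (c i) (ρ i)) ∧
    ∀ i j, i ≠ j → z i * (z j)⁻¹ ∉ F} with hV
  have hyV : y ∈ V := ⟨hy1, fun i j hij => hy2 i (Finset.mem_univ i) j (Finset.mem_univ j) hij⟩
  have hVopen : IsOpen V := by
    have : V = (⋂ i, {z : ι → G | z i ∈ ball (c i) (ρ i)}) ∩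
        ⋂ i, ⋂ j, {z : ι → G | i ≠ j → z i * (z j)⁻¹ ∉ F} := by
      ext z
      simp only [hV, Set.mem_setOf_eq, Set.mem_inter_iff, Set.mem_iInter]
    rw [this]
    refine IsOpen.inter (isOpen_iInter_of_finite fun i => ?_)
      (isOpen_iInter_of_finite fun i => isOpen_iInter_of_finite fun j => ?_)
    · exact isOpen_ball.preimage (continuous_apply i)
    · by_cases hij : i = j
      · subst hij
        have : {z : ι → G | i ≠ i → z i * (z i)⁻¹ ∉ F} = Set.univ := by
          ext z; simp
        rw [this]; exact isOpen_univ
      · have : {z : ι → G | i ≠ j → z i * (z j)⁻¹ ∉ F} =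
            (fun z : ι → G => z i * (z j)⁻¹) ⁻¹' Fᶜ := by
          ext z; simp [hij]
        rw [this]
        exact hFc.isOpen_compl.preimage (((continuous_apply i)).mul ((continuous_apply j).inv))
  obtain ⟨ε₀, hε₀, hball⟩ := Metric.isOpen_iff.1 hVopen y hyV
  refine ⟨y, min (ε₀ / 2) δ, lt_min (half_pos hε₀) hδ, min_le_right _ _, ?_, ?_⟩
  · intro i u hu
    have hz : Function.update y i u ∈ ball y ε₀ := by
      rw [mem_ball, dist_pi_lt_iff hε₀]
      intro k
      by_cases hk : k = i
      · subst hk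
        rw [Function.update_self]
        calc dist u (y k) ≤ min (ε₀ / 2) δ := mem_closedBall.1 hu
          _ ≤ ε₀ / 2 := min_le_left _ _
          _ < ε₀ := half_lt_self hε₀
      · rw [Function.update_of_ne hk, dist_self]; exact hε₀
    have := (hball hz).1 i
    rwa [Function.update_self] at this
  · intro i j hij u hu v hv
    have hz : Function.update (Function.update y i u) j v ∈ ball y ε₀ := by
      rw [mem_ball, dist_pi_lt_iff hε₀]
      intro k
      by_cases hkj : k = j
      · subst hkj
        rw [Function.update_self]
        calc dist v (y k) ≤ min (ε₀ / 2) δ := mem_closedBall.1 hv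
          _ ≤ ε₀ / 2 := min_le_left _ _
          _ < ε₀ := half_lt_self hε₀
      · rw [Function.update_of_ne hkj]
        by_cases hki : k = i
        · subst hki
          rw [Function.update_self]
          calc dist u (y k) ≤ min (ε₀ / 2) δ := mem_closedBall.1 hu
            _ ≤ ε₀ / 2 := min_le_left _ _
            _ < ε₀ := half_lt_self hε₀
        · rw [Function.update_of_ne hki, dist_self]; exact hε₀
    have := (hball hz).2 i j hij
    rwa [Function.update_of_ne (fun h => hij (h : i = j)), Function.update_self,
      Function.update_self] at this
noncomputable def iterDep {T : ℕ → Sort*} (base : T 0) (step : ∀ n, T n → T (n + 1)) :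
    ∀ n, T n
  | 0 => base
  | n + 1 => step n (iterDep base step n)

variable [CompleteSpace G]

lemma exists_cantor_family (hnlc : ¬ LocallyCompactSpace G) (C : ℕ → Set G)
    (hC : ∀ n, IsCompact (C n)) (hmono : Monotone C) :
    ∃ f : (ℕ → Bool) → G, Function.Injective f ∧
      ∀ a b, a ≠ b → f a * (f b)⁻¹ ∉ ⋃ n, (C n)⁻¹ * C n := by
  classical
  set F : ℕ → Set G := fun n => ((C n)⁻¹ * C n) ∪ {1} with hF
  have hFcomp : ∀ n, IsCompact (F n) := fun n =>
    (((hC n).inv).mul (hC n)).union isCompact_singleton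
  have hFclosed : ∀ n, IsClosed (F n) := fun n => (hFcomp n).isClosed
  have hFint : ∀ n, interior (F n) = ∅ := by
    intro n
    by_contra h
    obtain ⟨x, hx⟩ := Set.nonempty_iff_ne_empty.2 h
    exact hnlc ((hFcomp n).locallyCompactSpace_of_mem_nhds_of_group
      (mem_interior_iff_mem_nhds.1 hx))
  have hFsymm : ∀ n, ∀ z ∈ F n, z⁻¹ ∈ F n := by
    intro n z hz
    rcases hz with hz | hz
    · obtain ⟨x, hx, y, hy, rfl⟩ := hz
      left
      refine ⟨y⁻¹, ?_, x⁻¹, ?_, ?_⟩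
      · rwa [Set.mem_inv, inv_inv]
      · rwa [← Set.mem_inv]
      · rw [mul_inv_rev]
    · right; rw [Set.mem_singleton_iff] at hz ⊢; rw [hz, inv_one]
  have hFmono : Monotone F := fun n m hnm =>
    Set.union_subset_union (Set.mul_subset_mul (Set.inv_subset_inv.2 (hmono hnm)) (hmono hnm))
      le_rfl
  have hFone : ∀ n, (1 : G) ∈ F n := fun n => Or.inr rfl
  -- the inductive step
  have hstep : ∀ n (p : ((Fin n → Bool) → G) × ℝ), ∃ q : ((Fin (n + 1) → Bool) → G) × ℝ,
      0 < p.2 → (0 < q.2 ∧ q.2 ≤ p.2 / 2 ∧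
        (∀ s, closedBall (q.1 s) q.2 ⊆ closedBall (p.1 fun i => s i.castSucc) p.2) ∧
        (∀ s t, s ≠ t → ∀ u ∈ closedBall (q.1 s) q.2, ∀ v ∈ closedBall (q.1 t) q.2,
          u * v⁻¹ ∉ F (n + 1))) := by
    intro n p
    by_cases hp : 0 < p.2
    · obtain ⟨y, ε, hε, hεδ, hsub, hsep⟩ := step_core (hFclosed (n + 1)) (hFint (n + 1))
        (hFsymm (n + 1)) (ι := Fin (n + 1) → Bool) (fun s => p.1 fun i => s i.castSucc)
        (fun _ => p.2) (fun _ => hp) (p.2 / 2) (half_pos hp)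
      exact ⟨(y, ε), fun _ => ⟨hε, hεδ,
        fun s => (hsub s).trans ball_subset_closedBall, hsep⟩⟩
    · exact ⟨((fun _ => 1), 1), fun h => absurd h hp⟩
  choose step hstepspec using hstep
  set seq : ∀ n, ((Fin n → Bool) → G) × ℝ :=
    iterDep ((fun _ => (1 : G)), (1 : ℝ)) step with hseq
  set X : ∀ n, (Fin n → Bool) → G := fun n => (seq n).1 with hX
  set R : ℕ → ℝ := fun n => (seq n).2 with hR
  have hpos : ∀ n, 0 < R n := by
    intro n
    induction n with
    | zero => exact one_pos
    | succ n ih => exact (hstepspec n (seq n) ih).1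
  have hhalf : ∀ n, R (n + 1) ≤ R n / 2 := fun n => (hstepspec n (seq n) (hpos n)).2.1
  have hnest : ∀ n (s : Fin (n + 1) → Bool),
      closedBall (X (n + 1) s) (R (n + 1)) ⊆
        closedBall (X n fun i => s i.castSucc) (R n) :=
    fun n => (hstepspec n (seq n) (hpos n)).2.2.1
  have hsep : ∀ n (s t : Fin n → Bool), s ≠ t →
      ∀ u ∈ closedBall (X n s) (R n), ∀ v ∈ closedBall (X n t) (R n), u * v⁻¹ ∉ F n := by
    intro n
    match n with
    | 0 => exact fun s t hst => absurd (Subsingleton.elim s t) hst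
    | n + 1 => exact (hstepspec n (seq n) (hpos n)).2.2.2
  have hRle : ∀ n, R n ≤ (1 / 2 : ℝ) ^ n := by
    intro n
    induction n with
    | zero => show (1 : ℝ) ≤ (1 / 2 : ℝ) ^ 0; norm_num
    | succ n ih =>
        calc R (n + 1) ≤ R n / 2 := hhalf n
          _ ≤ (1 / 2 : ℝ) ^ n / 2 := by linarith
          _ = (1 / 2 : ℝ) ^ (n + 1) := by ring
  -- the approximating sequences
  set u : (ℕ → Bool) → ℕ → G := fun a n => X n (fun i => a i) with hu
  have hchain : ∀ a n, closedBall (u a (n + 1)) (R (n + 1)) ⊆ closedBall (u a n) (R n) := by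
    intro a n
    have := hnest n (fun i : Fin (n + 1) => a i)
    convert this using 2
    rfl
  have hsub2 : ∀ a n m, n ≤ m → closedBall (u a m) (R m) ⊆ closedBall (u a n) (R n) := by
    intro a n m hnm
    induction m, hnm using Nat.le_induction with
    | base => exact subset_rfl
    | succ m hm ih => exact (hchain a m).trans ih
  have hmem : ∀ a n m, n ≤ m → u a m ∈ closedBall (u a n) (R n) := fun a n m hnm =>
    hsub2 a n m hnm (mem_closedBall_self (hpos m).le)
  have hcauchy : ∀ a, CauchySeq (u a) := by
    intro a
    apply cauchySeq_of_le_geometric (1 / 2 : ℝ) 1 (by norm_num)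
    intro n
    have h1 : u a (n + 1) ∈ closedBall (u a n) (R n) := hmem a n (n + 1) (Nat.le_succ n)
    calc dist (u a n) (u a (n + 1)) = dist (u a (n + 1)) (u a n) := dist_comm _ _
      _ ≤ R n := mem_closedBall.1 h1
      _ ≤ (1 / 2 : ℝ) ^ n := hRle n
      _ = 1 * (1 / 2 : ℝ) ^ n := (one_mul _).symm
  have hlim : ∀ a, ∃ l, Tendsto (u a) atTop (𝓝 l) := fun a =>
    cauchySeq_tendsto_of_complete (hcauchy a)
  choose f hf using hlim
  have hfmem : ∀ a n, f a ∈ closedBall (u a n) (R n) := by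
    intro a n
    refine IsClosed.mem_of_tendsto Metric.isClosed_closedBall (hf a) ?_
    filter_upwards [eventually_ge_atTop n] with m hm
    exact hmem a n m hm
  have hkey : ∀ a b : ℕ → Bool, a ≠ b → ∃ N, ∀ n, N + 1 ≤ n → f a * (f b)⁻¹ ∉ F n := by
    intro a b hab
    obtain ⟨N, hN⟩ := Function.ne_iff.1 hab
    refine ⟨N, fun n hn => ?_⟩
    have hne : (fun i : Fin n => a i) ≠ (fun i : Fin n => b i) := by
      intro h
      have := congrFun h ⟨N, hn⟩
      exact hN this
    exact hsep n _ _ hne (f a) (hfmem a n) (f b) (hfmem b n)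
  refine ⟨f, ?_, ?_⟩
  · intro a b hfab
    by_contra hab
    obtain ⟨N, hNspec⟩ := hkey a b hab
    have h1 : f a * (f b)⁻¹ = 1 := by rw [hfab]; group
    exact hNspec (N + 1) le_rfl (h1 ▸ hFone (N + 1))
  · intro a b hab h
    rw [Set.mem_iUnion] at h
    obtain ⟨m, hm⟩ := h
    obtain ⟨N, hNspec⟩ := hkey a b hab
    have h1 : f a * (f b)⁻¹ ∈ F (max m (N + 1)) :=
      hFmono (le_max_left m (N + 1)) (Or.inl hm)
    exact hNspec (max m (N + 1)) (le_max_right m (N + 1)) h1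

end Indep

section Tight

open ENNReal

lemma exists_compact_compl_le {X : Type*} [MetricSpace X] [CompleteSpace X]
    [SecondCountableTopology X] [Nonempty X] [MeasurableSpace X] [OpensMeasurableSpace X]
    (μ : Measure X) [IsFiniteMeasure μ] {ε : ℝ≥0∞} (hε : ε ≠ 0) :
    ∃ K : Set X, IsCompact K ∧ μ Kᶜ ≤ ε := by
  classical
  obtain ⟨u, hu⟩ := TopologicalSpace.exists_dense_seq X
  obtain ⟨δ, hδpos, hδsum⟩ := ENNReal.exists_pos_sum_of_countable hε ℕ
  set S : ℕ → ℕ → Set X := fun k m => ⋃ i ∈ Finset.range m, closedBall (u i) (1 / (k + 1))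
    with hS
  have hSclosed : ∀ k m, IsClosed (S k m) := fun k m =>
    (Finset.range m).finite_toSet.isClosed_biUnion fun i _ => Metric.isClosed_closedBall
  have hSmono : ∀ k, Monotone (S k) := by
    intro k m m' hm
    exact Set.biUnion_subset_biUnion_left (by exact_mod_cast Finset.range_subset_range.2 hm)
  have hScov : ∀ k x, ∃ m, x ∈ S k m := by
    intro k x
    have hpos : (0 : ℝ) < 1 / (k + 1) := by positivity
    obtain ⟨i, hi⟩ := Metric.denseRange_iff.1 hu x _ hpos
    exact ⟨i + 1, Set.mem_biUnion (Finset.self_mem_range_succ i) (le_of_lt hi)⟩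
  have hm : ∀ k : ℕ, ∃ m, μ (S k m)ᶜ < δ k := by
    intro k
    have hanti : Antitone fun m => (S k m)ᶜ := fun m m' h => Set.compl_subset_compl.2 (hSmono k h)
    have hint : (⋂ m, (S k m)ᶜ) = ∅ := by
      have huniv : (⋃ m, S k m) = Set.univ :=
        Set.eq_univ_of_forall fun x => Set.mem_iUnion.2 (hScov k x)
      rw [← Set.compl_iUnion, huniv, Set.compl_univ]
    have htend := MeasureTheory.tendsto_measure_iInter_atTop
      (s := fun m => (S k m)ᶜ)
      (fun m => ((hSclosed k m).measurableSet.compl).nullMeasurableSet)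
      hanti ⟨0, measure_ne_top μ _⟩
    rw [hint, measure_empty] at htend
    have := htend.eventually_lt_const (ENNReal.coe_pos.2 (hδpos k))
    exact this.exists
  choose m hmspec using hm
  refine ⟨⋂ k, S k (m k), ?_, ?_⟩
  · refine TotallyBounded.isCompact_of_isClosed ?_
      (isClosed_iInter fun k => hSclosed k (m k))
    rw [Metric.totallyBounded_iff]
    intro ε' hε'
    obtain ⟨k, hk⟩ := exists_nat_one_div_lt hε'
    refine ⟨u '' (Finset.range (m k) : Set ℕ), ((Finset.range (m k)).finite_toSet).image u, ?_⟩
    intro x hx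
    have hxS : x ∈ S k (m k) := Set.mem_iInter.1 hx k
    obtain ⟨i, hi, hxi⟩ := Set.mem_iUnion₂.1 hxS
    refine Set.mem_biUnion (Set.mem_image_of_mem u hi) ?_
    have : dist x (u i) ≤ 1 / (k + 1) := Metric.mem_closedBall.1 hxi
    exact Metric.mem_ball.2 (lt_of_le_of_lt this hk)
  · rw [Set.compl_iInter]
    calc μ (⋃ k, (S k (m k))ᶜ) ≤ ∑' k, μ (S k (m k))ᶜ := measure_iUnion_le _
      _ ≤ ∑' k, (δ k : ℝ≥0∞) := ENNReal.tsum_le_tsum fun k => (hmspec k).le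
      _ ≤ ε := hδsum.le

end Tight

open ENNReal
/-- Let `G` be a Polish group that is not locally compact, and `μ` a
finite Borel measure on `G`. Then `μ` is `2^{ℵ₀}`-thin: there is a set `P ⊆ G` of
cardinality continuum whose right translates of `μ` are pairwise mutually singular. -/
theorem stmt_19 {G : Type u} [Group G] [TopologicalSpace G] [IsTopologicalGroup G]
    [PolishSpace G] [MeasurableSpace G] [BorelSpace G]
    (hnlc : ¬ LocallyCompactSpace G)
    (μ : Measure G) [IsFiniteMeasure μ] :
    ∃ P : Set G, Cardinal.mk P = Cardinal.continuum ∧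
      P.Pairwise fun p p' => μ.map (· * p) ⟂ₘ μ.map (· * p') := by
  classical
  letI := TopologicalSpace.upgradeIsCompletelyMetrizable G
  have hne : Nonempty G := ⟨1⟩
  have hK : ∀ n : ℕ, ∃ K : Set G, IsCompact K ∧ μ Kᶜ ≤ ((n : ℝ≥0∞) + 1)⁻¹ := by
    intro n
    exact exists_compact_compl_le μ (by simp)
  choose K hKcomp hKle using hK
  set C : ℕ → Set G := fun n => ⋃ i ∈ Finset.range (n + 1), K i with hC
  have hCcomp : ∀ n, IsCompact (C n) := fun n =>
    (Finset.range (n + 1)).finite_toSet.isCompact_biUnion fun i _ => hKcomp i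
  have hCmono : Monotone C := by
    intro n n' h
    exact Set.biUnion_subset_biUnion_left
      (by exact_mod_cast Finset.range_subset_range.2 (Nat.succ_le_succ h))
  set A : Set G := ⋃ n, C n with hA
  have hKA : ∀ n, K n ⊆ A := fun n x hx =>
    Set.mem_iUnion.2 ⟨n, Set.mem_biUnion (Finset.self_mem_range_succ n) hx⟩
  have hAmeas : MeasurableSet A :=
    MeasurableSet.iUnion fun n => (hCcomp n).isClosed.measurableSet
  have hAnull : μ Aᶜ = 0 := by
    by_contra h
    obtain ⟨n, hn⟩ := ENNReal.exists_inv_nat_lt h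
    have h1 : μ Aᶜ ≤ ((n : ℝ≥0∞) + 1)⁻¹ :=
      le_trans (measure_mono (Set.compl_subset_compl.2 (hKA n))) (hKle n)
    have h2 : ((n : ℝ≥0∞) + 1)⁻¹ ≤ ((n : ℝ≥0∞))⁻¹ :=
      ENNReal.inv_le_inv' le_self_add
    exact absurd (lt_of_lt_of_le hn (h1.trans h2)) (lt_irrefl _)
  obtain ⟨f, hfinj, hfavoid⟩ := exists_cantor_family hnlc C hCcomp hCmono
  set g : ULift.{u} (ℕ → Bool) → G := fun a => f a.down with hg
  have hginj : Function.Injective g := fun a b h => ULift.down_injective (hfinj h)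
  refine ⟨Set.range g, ?_, ?_⟩
  · rw [Cardinal.mk_range_eq g hginj, Cardinal.mk_uLift]
    rw [← Cardinal.power_def, Cardinal.mk_bool, Cardinal.mk_nat, Cardinal.two_power_aleph0,
      Cardinal.lift_continuum]
  · rintro p ⟨a, rfl⟩ p' ⟨b, rfl⟩ hne'
    have hab : a.down ≠ b.down := fun h => hne' (by rw [hg]; simp [h])
    have hquot : g a * (g b)⁻¹ ∉ ⋃ n, (C n)⁻¹ * C n := hfavoid a.down b.down hab
    set s : Set G := (fun x => x * (g b)⁻¹) ⁻¹' A with hs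
    have hsmeas : MeasurableSet s := hAmeas.preimage (measurable_mul_const _)
    refine ⟨s, hsmeas, ?_, ?_⟩
    · rw [Measure.map_apply (measurable_mul_const (g a)) hsmeas]
      refine measure_mono_null ?_ hAnull
      intro x hx
      simp only [Set.mem_preimage, hs] at hx
      intro hxA
      obtain ⟨n1, hn1⟩ := Set.mem_iUnion.1 hx
      obtain ⟨n2, hn2⟩ := Set.mem_iUnion.1 hxA
      apply hquot
      refine Set.mem_iUnion.2 ⟨max n1 n2, ?_⟩
      have h1 : x * g a * (g b)⁻¹ ∈ C (max n1 n2) := hCmono (le_max_left n1 n2) hn1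
      have h2 : x ∈ C (max n1 n2) := hCmono (le_max_right n1 n2) hn2
      refine ⟨x⁻¹, Set.inv_mem_inv.2 h2, x * g a * (g b)⁻¹, h1, ?_⟩
      group
    · rw [Measure.map_apply (measurable_mul_const (g b)) hsmeas.compl]
      have heq : (fun x => x * g b) ⁻¹' sᶜ = Aᶜ := by
        ext x
        simp [hs, mul_inv_cancel_right]
      rw [heq, hAnull]
end
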